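/- Let k be a field and q a nondegenerate quadratic form over k in three variables (defining a smooth conic C in P^2). If q has a nontrivial zero over a field extension L/k of odd degree, then q has a nontrivial zero over k (Springer's theorem in the rank-3 case), and hence C is isomorphic to P^1 over k. -/

import Mathlib

open scoped TensorProduct
open Polynomial

set_option maxRecDepth 8000

namespace SpringerAux

universe u

/-- Evaluation of a ternary quadratic polynomial with coefficient list `c`. -/
def Ev {A : Type*} [CommRing A] (c : Fin 6 → A) (v : Fin 3 → A) : A :=
  c 0 * (v 0 * v 0) + c 1 * (v 1 * v 1) + c 2 * (v 2 * v 2)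
    + c 3 * (v 0 * v 1) + c 4 * (v 0 * v 2) + c 5 * (v 1 * v 2)

lemma map_Ev {A B : Type*} [CommRing A] [CommRing B] {G : Type*} [FunLike G A B]
    [RingHomClass G A B] (ψ : G) (c : Fin 6 → A) (v : Fin 3 → A) :
    ψ (Ev c v) = Ev (⇑ψ ∘ c) (⇑ψ ∘ v) := by
  simp [Ev, map_add, map_mul]

lemma Ev_mul_left {A : Type*} [CommRing A] (c : Fin 6 → A) (t : A) (v : Fin 3 → A) :
    Ev c (fun i => t * v i) = t * t * Ev c v := by
  simp only [Ev]; ring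

lemma expand3 {A M : Type*} [CommRing A] [AddCommGroup M] [Module A M]
    (Q : QuadraticMap A M A) (a b c : A) (x y z : M) :
    Q (a • x + b • y + c • z) = a * a * Q x + b * b * Q y + c * c * Q z
      + a * b * (QuadraticMap.polar Q x y) + a * c * (QuadraticMap.polar Q x z)
      + b * c * (QuadraticMap.polar Q y z) := by
  have hadd : ∀ u w : M, Q (u + w) = Q u + Q w + QuadraticMap.polar Q u w := by
    intro u w; simp only [QuadraticMap.polar]; ring
  rw [add_assoc, hadd, hadd (b • y) (c • z)]
  simp only [QuadraticMap.polar_add_right, QuadraticMap.polar_smul_left,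
    QuadraticMap.polar_smul_right, QuadraticMap.map_smul, smul_eq_mul]
  ring

lemma coeff_mul_of_le {R : Type*} [CommSemiring R] (p q : R[X]) (d : ℕ)
    (hp : p.natDegree ≤ d) (hq : q.natDegree ≤ d) :
    (p * q).coeff (d + d) = p.coeff d * q.coeff d := by
  rw [Polynomial.coeff_mul, Finset.sum_eq_single (d, d)]
  · intro b hb hne
    rw [Finset.HasAntidiagonal.mem_antidiagonal] at hb
    rcases lt_or_ge d b.1 with h1 | h1
    · rw [Polynomial.coeff_eq_zero_of_natDegree_lt (lt_of_le_of_lt hp h1), zero_mul]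
    · have hne' : ¬(b.1 = d ∧ b.2 = d) := by
        intro ⟨ha, hb'⟩; exact hne (Prod.ext ha hb')
      have h2 : d < b.2 := by omega
      rw [Polynomial.coeff_eq_zero_of_natDegree_lt (lt_of_le_of_lt hq h2), mul_zero]
  · intro h
    exact absurd (by simp : (d, d) ∈ Finset.HasAntidiagonal.antidiagonal (d + d)) h

lemma exists_odd_irreducible_factor_aux {F : Type*} [Field F] :
    ∀ n : ℕ, ∀ g : F[X], g.natDegree = n → g ≠ 0 → Odd g.natDegree →
      ∃ h : F[X], h.Monic ∧ Irreducible h ∧ Odd h.natDegree ∧ h ∣ g := by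
  intro n
  induction n using Nat.strong_induction_on with
  | _ n IH =>
  intro g hn hg0 hodd
  have hu : ¬IsUnit g := by
    intro hu
    rw [Polynomial.isUnit_iff] at hu
    obtain ⟨r, -, rfl⟩ := hu
    simp [Polynomial.natDegree_C] at hodd
  obtain ⟨i, hi, hid⟩ := WfDvdMonoid.exists_irreducible_factor hu hg0
  have hi0 : i ≠ 0 := hi.ne_zero
  have hlcu : IsUnit (C i.leadingCoeff⁻¹) :=
    Polynomial.isUnit_C.mpr (IsUnit.mk0 _ (inv_ne_zero (Polynomial.leadingCoeff_ne_zero.mpr hi0)))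
  set h := i * C i.leadingCoeff⁻¹ with hh
  have hassoc : Associated i h := ⟨hlcu.unit, by rw [IsUnit.unit_spec]⟩
  have hmono : h.Monic := Polynomial.monic_mul_leadingCoeff_inv hi0
  have hirr : Irreducible h := hassoc.irreducible hi
  have hdvd : h ∣ g := hassoc.symm.dvd.trans hid
  have hpos : 0 < h.natDegree := hirr.natDegree_pos
  by_cases hoh : Odd h.natDegree
  · exact ⟨h, hmono, hirr, hoh, hdvd⟩
  · obtain ⟨g2, rfl⟩ := hdvd
    have hg2 : g2 ≠ 0 := by rintro rfl; simp at hg0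
    have hdeg : (h * g2).natDegree = h.natDegree + g2.natDegree :=
      Polynomial.natDegree_mul hirr.ne_zero hg2
    have hoddg2 : Odd g2.natDegree := by
      rw [Nat.not_odd_iff_even] at hoh
      obtain ⟨a, ha⟩ := hoh
      obtain ⟨b, hb⟩ := hdeg ▸ hodd
      exact ⟨b - a, by omega⟩
    have hlt : g2.natDegree < (h * g2).natDegree := by omega
    obtain ⟨h', m, irr, odd, dvd⟩ := IH g2.natDegree (hn ▸ hlt) g2 rfl hg2 hoddg2
    exact ⟨h', m, irr, odd, dvd.mul_left h⟩

lemma exists_odd_irreducible_factor {F : Type*} [Field F] (g : F[X]) (hg0 : g ≠ 0)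
    (hodd : Odd g.natDegree) :
    ∃ h : F[X], h.Monic ∧ Irreducible h ∧ Odd h.natDegree ∧ h ∣ g :=
  exists_odd_irreducible_factor_aux g.natDegree g rfl hg0 hodd


lemma simple {F : Type*} [Field F] (c : Fin 6 → F) :
    ∀ m : ℕ, ∀ h : F[X], h.Monic → Irreducible h → Odd h.natDegree → h.natDegree = m →
      (∃ v : Fin 3 → AdjoinRoot h, v ≠ 0 ∧ Ev (⇑(algebraMap F (AdjoinRoot h)) ∘ c) v = 0) →
      ∃ w : Fin 3 → F, w ≠ 0 ∧ Ev c w = 0 := by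
  intro m
  induction m using Nat.strong_induction_on with
  | _ m IH =>
  rintro h hmono hirr hoddm hdm ⟨v, hv0, hvE⟩
  classical
  haveI : Fact (Irreducible h) := ⟨hirr⟩
  have hm1 : 1 ≤ m := by obtain ⟨a, ha⟩ := hdm ▸ hoddm; omega
  have hrep : ∀ i : Fin 3, ∃ p : F[X], AdjoinRoot.mk h p = v i ∧ p.natDegree ≤ m - 1 := by
    intro i
    obtain ⟨p0, hp0⟩ := AdjoinRoot.mk_surjective (v i)
    refine ⟨p0 %ₘ h, ?_, ?_⟩
    · rw [Polynomial.modByMonic_eq_sub_mul_div _ h, map_sub, map_mul, AdjoinRoot.mk_self,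
        zero_mul, sub_zero, hp0]
    · by_cases hz : p0 %ₘ h = 0
      · simp [hz]
      · have h1 := Polynomial.degree_modByMonic_lt p0 hmono
        have h2 : (p0 %ₘ h).natDegree < h.natDegree :=
          Polynomial.natDegree_lt_natDegree hz h1
        omega
  choose p hp hpd using hrep
  obtain ⟨i0, hi0⟩ := Function.ne_iff.mp hv0
  have hni0 : ¬ h ∣ p i0 := by
    rw [← AdjoinRoot.mk_eq_zero, hp i0]; exact hi0
  set g := EuclideanDomain.gcd (EuclideanDomain.gcd (p 0) (p 1)) (p 2) with hg
  have hgdvd : ∀ i, g ∣ p i := by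
    intro i
    fin_cases i
    · exact (EuclideanDomain.gcd_dvd_left _ _).trans (EuclideanDomain.gcd_dvd_left _ _)
    · exact (EuclideanDomain.gcd_dvd_left _ _).trans (EuclideanDomain.gcd_dvd_right _ _)
    · exact EuclideanDomain.gcd_dvd_right _ _
  have hgh : ¬ h ∣ g := fun hh => hni0 (hh.trans (hgdvd i0))
  have hg0 : g ≠ 0 := fun h0 => hgh (h0 ▸ dvd_zero h)
  set p' : Fin 3 → F[X] := fun i => p i / g with hp'
  have hfac : ∀ i, p i = g * p' i := fun i =>
    (EuclideanDomain.mul_div_cancel' hg0 (hgdvd i)).symm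
  have hmkg : AdjoinRoot.mk h g ≠ 0 := by rw [Ne, AdjoinRoot.mk_eq_zero]; exact hgh
  have hvE' : Ev (⇑(algebraMap F (AdjoinRoot h)) ∘ c) (fun i => AdjoinRoot.mk h (p' i)) = 0 := by
    have e1 : (fun i => AdjoinRoot.mk h (p i))
        = fun i => AdjoinRoot.mk h g * AdjoinRoot.mk h (p' i) := by
      funext i; rw [hfac i, map_mul]
    have e2 : Ev (⇑(algebraMap F (AdjoinRoot h)) ∘ c) (fun i => AdjoinRoot.mk h (p i)) = 0 := by
      have e3 : (fun i => AdjoinRoot.mk h (p i)) = v := funext hp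
      rw [e3]; exact hvE
    have e4 := Ev_mul_left (⇑(algebraMap F (AdjoinRoot h)) ∘ c) (AdjoinRoot.mk h g)
      (fun i => AdjoinRoot.mk h (p' i))
    rw [e1, e4] at e2
    rcases mul_eq_zero.mp e2 with h1 | h1
    · exact absurd (mul_self_eq_zero.mp h1) hmkg
    · exact h1
  have hp'ne0 : p' i0 ≠ 0 := fun h0 => hni0 (by rw [hfac i0, h0, mul_zero]; exact dvd_zero h)
  have hp'deg : ∀ i, (p' i).natDegree ≤ m - 1 := by
    intro i
    by_cases h0 : p' i = 0
    · simp [h0]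
    · have h2 : (p i).natDegree = g.natDegree + (p' i).natDegree := by
        rw [hfac i]; exact Polynomial.natDegree_mul hg0 h0
      have := hpd i
      omega
  set d := max (max ((p' 0).natDegree) ((p' 1).natDegree)) ((p' 2).natDegree) with hd
  have hdle : ∀ i, (p' i).natDegree ≤ d := by
    intro i
    fin_cases i
    · exact (le_max_left _ _).trans (le_max_left _ _)
    · exact (le_max_right _ _).trans (le_max_left _ _)
    · exact le_max_right _ _
  have hdm1 : d ≤ m - 1 := by
    have := hp'deg 0; have := hp'deg 1; have := hp'deg 2; omega
  have hjex : ∃ j, p' j ≠ 0 ∧ (p' j).natDegree = d := by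
    by_cases hd0 : d = 0
    · exact ⟨i0, hp'ne0, le_antisymm (hd0 ▸ hdle i0) (by omega)⟩
    · have hcases : d = (p' 0).natDegree ∨ d = (p' 1).natDegree ∨ d = (p' 2).natDegree := by
        omega
      rcases hcases with h1 | h1 | h1
      · exact ⟨0, fun h0 => hd0 (by rw [h1, h0, Polynomial.natDegree_zero]), h1.symm⟩
      · exact ⟨1, fun h0 => hd0 (by rw [h1, h0, Polynomial.natDegree_zero]), h1.symm⟩
      · exact ⟨2, fun h0 => hd0 (by rw [h1, h0, Polynomial.natDegree_zero]), h1.symm⟩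
  obtain ⟨j, hj0, hjd⟩ := hjex
  set w : Fin 3 → F := fun i => (p' i).coeff d with hw
  have hw0 : w ≠ 0 := by
    intro hww
    have h1 : (p' j).coeff ((p' j).natDegree) = 0 := by rw [hjd]; exact congrFun hww j
    exact hj0 (Polynomial.leadingCoeff_eq_zero.mp h1)
  set P : F[X] := Ev (fun i => Polynomial.C (c i)) p' with hP
  have hCc : (⇑(AdjoinRoot.mk h) ∘ fun i => Polynomial.C (c i))
      = ⇑(algebraMap F (AdjoinRoot h)) ∘ c := by
    funext i; rw [Function.comp_apply, Function.comp_apply, AdjoinRoot.algebraMap_eq]; rfl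
  have hmkP : AdjoinRoot.mk h P = 0 := by
    rw [hP, map_Ev, hCc]; exact hvE'
  have hhP : h ∣ P := (AdjoinRoot.mk_eq_zero).mp hmkP
  have hcoeff : P.coeff (d + d) = Ev c w := by
    simp only [hP, Ev, Polynomial.coeff_add, Polynomial.coeff_C_mul, hw,
      coeff_mul_of_le _ _ d (hdle 0) (hdle 0), coeff_mul_of_le _ _ d (hdle 1) (hdle 1),
      coeff_mul_of_le _ _ d (hdle 2) (hdle 2), coeff_mul_of_le _ _ d (hdle 0) (hdle 1),
      coeff_mul_of_le _ _ d (hdle 0) (hdle 2), coeff_mul_of_le _ _ d (hdle 1) (hdle 2)]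
  have hb : ∀ (x : F) (a b : F[X]), a.natDegree ≤ d → b.natDegree ≤ d →
      (Polynomial.C x * (a * b)).natDegree ≤ d + d := by
    intro x a b ha hbb
    have h1 : (Polynomial.C x * (a * b)).natDegree
        ≤ (Polynomial.C x).natDegree + (a * b).natDegree := Polynomial.natDegree_mul_le
    have h2 : (a * b).natDegree ≤ a.natDegree + b.natDegree := Polynomial.natDegree_mul_le
    have h3 : (Polynomial.C x).natDegree = 0 := Polynomial.natDegree_C x
    omega
  have hPdegle : P.natDegree ≤ d + d := by
    refine (Polynomial.natDegree_add_le _ _).trans (max_le ((Polynomial.natDegree_add_le _ _).trans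
      (max_le ((Polynomial.natDegree_add_le _ _).trans (max_le ((Polynomial.natDegree_add_le _ _).trans
      (max_le ((Polynomial.natDegree_add_le _ _).trans (max_le ?_ ?_)) ?_)) ?_)) ?_)) ?_)
    · exact hb _ _ _ (hdle 0) (hdle 0)
    · exact hb _ _ _ (hdle 1) (hdle 1)
    · exact hb _ _ _ (hdle 2) (hdle 2)
    · exact hb _ _ _ (hdle 0) (hdle 1)
    · exact hb _ _ _ (hdle 0) (hdle 2)
    · exact hb _ _ _ (hdle 1) (hdle 2)
  by_cases hEw : Ev c w = 0
  · exact ⟨w, hw0, hEw⟩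
  have hP0 : P ≠ 0 := fun h0 => hEw (by rw [← hcoeff, h0, Polynomial.coeff_zero])
  have hPdeg : P.natDegree = d + d :=
    le_antisymm hPdegle (Polynomial.le_natDegree_of_ne_zero (by rw [hcoeff]; exact hEw))
  obtain ⟨g2, hg2⟩ := hhP
  have hg20 : g2 ≠ 0 := by rintro rfl; rw [mul_zero] at hg2; exact hP0 hg2
  have hdegsum : m + g2.natDegree = d + d := by
    have h1 : P.natDegree = h.natDegree + g2.natDegree := by
      rw [hg2]; exact Polynomial.natDegree_mul hirr.ne_zero hg20
    omega
  have hoddg2 : Odd g2.natDegree := by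
    obtain ⟨a, ha⟩ := hdm ▸ hoddm
    exact ⟨d - a - 1, by omega⟩
  have hg2lt : g2.natDegree < m := by omega
  obtain ⟨h', hm', hirr', hodd', hdvd'⟩ := exists_odd_irreducible_factor g2 hg20 hoddg2
  have hh'P : h' ∣ P := hg2 ▸ (hdvd'.mul_left h)
  have hh'deg : h'.natDegree < m :=
    lt_of_le_of_lt (Polynomial.natDegree_le_of_dvd hdvd' hg20) hg2lt
  have hnotall : ∃ i, ¬ h' ∣ p' i := by
    by_contra hall
    push_neg at hall
    have hgh' : g * h' ∣ g := by
      have h1 : ∀ i, g * h' ∣ p i := fun i => by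
        rw [hfac i]; exact mul_dvd_mul_left g (hall i)
      exact EuclideanDomain.dvd_gcd (EuclideanDomain.dvd_gcd (h1 0) (h1 1)) (h1 2)
    obtain ⟨t, ht⟩ := hgh'
    have h2 : h' * t = 1 := mul_left_cancel₀ hg0 (by rw [← mul_assoc, ← ht, mul_one])
    exact hirr'.not_isUnit (IsUnit.of_mul_eq_one _ h2)
  obtain ⟨i1, hi1⟩ := hnotall
  haveI : Fact (Irreducible h') := ⟨hirr'⟩
  refine IH h'.natDegree hh'deg h' hm' hirr' hodd' rfl
    ⟨fun i => AdjoinRoot.mk h' (p' i), ?_, ?_⟩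
  · intro h0
    exact hi1 ((AdjoinRoot.mk_eq_zero).mp (congrFun h0 i1))
  · have hCc' : (⇑(AdjoinRoot.mk h') ∘ fun i => Polynomial.C (c i))
        = ⇑(algebraMap F (AdjoinRoot h')) ∘ c := by
      funext i; rw [Function.comp_apply, Function.comp_apply, AdjoinRoot.algebraMap_eq]; rfl
    calc Ev (⇑(algebraMap F (AdjoinRoot h')) ∘ c) (fun i => AdjoinRoot.mk h' (p' i))
        = AdjoinRoot.mk h' P := by rw [hP, map_Ev, hCc']; rfl
      _ = 0 := (AdjoinRoot.mk_eq_zero).mpr hh'P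


/-- Descent for the quadratic polynomial `Ev c` through an intermediate step:
pulling an isotropic vector from a simple extension `F⟮a⟯` down to `F`. -/
lemma step {F E : Type*} [Field F] [Field E] [Algebra F E] [FiniteDimensional F E]
    (c : Fin 6 → F) (a : E)
    (hiso : ∃ w : Fin 3 → (IntermediateField.adjoin F {a} : IntermediateField F E),
      w ≠ 0 ∧ Ev (⇑(algebraMap F _) ∘ c) w = 0)
    (hodd : Odd (Module.finrank F (IntermediateField.adjoin F {a} : IntermediateField F E))) :
    ∃ w : Fin 3 → F, w ≠ 0 ∧ Ev c w = 0 := by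
  obtain ⟨w₀, hw₀0, hw₀E⟩ := hiso
  have hint : IsIntegral F a := IsIntegral.of_finite F a
  let e : AdjoinRoot (minpoly F a) ≃ₐ[F] (IntermediateField.adjoin F {a} : IntermediateField F E) :=
    IntermediateField.adjoinRootEquivAdjoin F hint
  have hdegfr : Module.finrank F (IntermediateField.adjoin F {a} : IntermediateField F E)
      = (minpoly F a).natDegree := IntermediateField.adjoin.finrank hint
  have hoddm : Odd ((minpoly F a).natDegree) := hdegfr ▸ hodd
  refine simple c (minpoly F a).natDegree (minpoly F a) (minpoly.monic hint)
    (minpoly.irreducible hint) hoddm rfl ⟨fun i => e.symm (w₀ i), ?_, ?_⟩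
  · intro h0
    apply hw₀0
    funext i
    have h1 : e.symm (w₀ i) = 0 := congrFun h0 i
    have h2 := congrArg e h1
    rw [AlgEquiv.apply_symm_apply, map_zero] at h2
    rw [h2]; rfl
  · have h1 := map_Ev (e.symm : _ →ₐ[F] AdjoinRoot (minpoly F a))
      (⇑(algebraMap F (IntermediateField.adjoin F {a} : IntermediateField F E)) ∘ c) w₀
    rw [hw₀E, map_zero] at h1
    have h2 : (⇑(e.symm : _ →ₐ[F] AdjoinRoot (minpoly F a))
        ∘ ⇑(algebraMap F (IntermediateField.adjoin F {a} : IntermediateField F E)) ∘ c)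
        = ⇑(algebraMap F (AdjoinRoot (minpoly F a))) ∘ c := by
      funext i
      simp only [Function.comp_apply]
      exact AlgHom.commutes _ _
    rw [h2] at h1
    exact h1.symm

/-- Springer descent for `Ev c` along any odd-degree extension, both fields in one universe. -/
lemma tower : ∀ n : ℕ, ∀ (F E : Type u) (_ : Field F) (_ : Field E) (_ : Algebra F E)
    (_ : FiniteDimensional F E), Odd n → Module.finrank F E = n → ∀ c : Fin 6 → F,
    (∃ v : Fin 3 → E, v ≠ 0 ∧ Ev (⇑(algebraMap F E) ∘ c) v = 0) →
    ∃ w : Fin 3 → F, w ≠ 0 ∧ Ev c w = 0 := by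
  intro n
  induction n using Nat.strong_induction_on with
  | _ n IH =>
  rintro F E _ _ _ _ hodd hn c ⟨v, hv0, hvE⟩
  by_cases hall : ∀ i, v i ∈ Set.range (algebraMap F E)
  · choose w hw using hall
    refine ⟨w, ?_, ?_⟩
    · intro h0
      apply hv0
      funext i
      rw [← hw i, congrFun h0 i]; simp
    · apply (algebraMap F E).injective
      rw [map_Ev, map_zero]
      have : ⇑(algebraMap F E) ∘ w = v := funext hw
      rw [this]
      exact hvE
  · push_neg at hall
    obtain ⟨j, hj⟩ := hall
    set a : E := v j with ha
    set K : IntermediateField F E := IntermediateField.adjoin F {a} with hK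
    have haK : a ∈ K := IntermediateField.mem_adjoin_simple_self F a
    have hKne : K ≠ ⊥ := by
      intro h0
      rw [h0, IntermediateField.mem_bot] at haK
      exact hj haK
    have hfin : Module.finrank F K * Module.finrank K E = n := by
      rw [← hn]; exact Module.finrank_mul_finrank F K E
    have hK2 : 2 ≤ Module.finrank F K := by
      have h1 : Module.finrank F K ≠ 1 := fun h1 => hKne (IntermediateField.finrank_eq_one_iff.mp h1)
      have h2 : 0 < Module.finrank F K := Module.finrank_pos
      omega
    have hKE : 0 < Module.finrank K E := Module.finrank_pos
    have hoddK : Odd (Module.finrank F K) ∧ Odd (Module.finrank K E) :=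
      (Nat.odd_mul.mp (hfin ▸ hodd))
    have hlt : Module.finrank K E < n := by
      have h3 : 2 * Module.finrank K E ≤ Module.finrank F K * Module.finrank K E :=
        Nat.mul_le_mul_right _ hK2
      omega
    haveI : FiniteDimensional K E := FiniteDimensional.right F (↥K) E
    have hKiso : ∃ w : Fin 3 → K, w ≠ 0 ∧ Ev (⇑(algebraMap F K) ∘ c) w = 0 := by
      refine IH (Module.finrank K E) hlt K E inferInstance inferInstance inferInstance this hoddK.2 rfl (⇑(algebraMap F K) ∘ c)
        ⟨v, hv0, ?_⟩
      have : ⇑(algebraMap K E) ∘ ⇑(algebraMap F K) ∘ c = ⇑(algebraMap F E) ∘ c := by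
        funext i
        simp only [Function.comp_apply]
        exact (IsScalarTower.algebraMap_apply F K E (c i)).symm
      rw [this]
      exact hvE
    exact step c a hKiso hoddK.1


end SpringerAux

open SpringerAux in
/-- Springer's theorem in the rank-3 case: let `k` be a field of characteristic
not `2` (encoded by `Invertible (2 : k)`), and let `q` be a nondegenerate quadratic form in three
variables over `k`. If `q` acquires a nontrivial zero over a finite field extension `L/k` of odd
degree, then `q` already has a nontrivial zero over `k` (so the associated smooth conic
`C ⊆ ℙ²` has a `k`-rational point and is isomorphic to `ℙ¹` over `k`). -/
theorem rank_three_springer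
    (k L : Type*) [Field k] [Field L] [Algebra k L] [Invertible (2 : k)]
    [FiniteDimensional k L] (hodd : Odd (Module.finrank k L))
    (q : QuadraticForm k (Fin 3 → k))
    (hq : (QuadraticMap.polarBilin q).Nondegenerate)
    (hL : ∃ v : L ⊗[k] (Fin 3 → k), v ≠ 0 ∧ QuadraticForm.baseChange L q v = 0) :
    ∃ v : Fin 3 → k, v ≠ 0 ∧ q v = 0 := by
  classical
  obtain ⟨v, hv0, hvQ⟩ := hL
  let bk := Pi.basisFun k (Fin 3)
  let b := bk.baseChange L
  let l : Fin 3 → L := fun i => b.repr v i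
  let e : Fin 3 → (Fin 3 → k) := fun i => bk i
  let c : Fin 6 → k := ![q (e 0), q (e 1), q (e 2), QuadraticMap.polar q (e 0) (e 1),
    QuadraticMap.polar q (e 0) (e 2), QuadraticMap.polar q (e 1) (e 2)]
  have hc5 : c 5 = QuadraticMap.polar q (e 1) (e 2) := rfl
  have hc4 : c 4 = QuadraticMap.polar q (e 0) (e 2) := rfl
  have hc3 : c 3 = QuadraticMap.polar q (e 0) (e 1) := rfl
  have hc2 : c 2 = q (e 2) := rfl
  have hc1 : c 1 = q (e 1) := rfl
  have hc0 : c 0 = q (e 0) := rfl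
  have hqEv : ∀ w : Fin 3 → k, q w = Ev c w := by
    intro w
    have hw : w = w 0 • e 0 + w 1 • e 1 + w 2 • e 2 := by
      have h1 := bk.sum_repr w
      rw [Fin.sum_univ_three] at h1
      simp only [Pi.basisFun_repr, bk] at h1
      exact h1.symm
    conv_lhs => rw [hw]
    rw [expand3]
    simp only [Ev, hc0, hc1, hc2, hc3, hc4, hc5]
    ring
  have hv : v = l 0 • b 0 + l 1 • b 1 + l 2 • b 2 := by
    have h1 := b.sum_repr v
    rw [Fin.sum_univ_three] at h1
    exact h1.symm
  have hQb : ∀ i, QuadraticForm.baseChange L q (b i) = algebraMap k L (q (e i)) := by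
    intro i
    rw [show b i = (1 : L) ⊗ₜ[k] (bk i) from Module.Basis.baseChange_apply L bk i,
      QuadraticForm.baseChange_tmul]
    simp [Algebra.smul_def]
    rfl
  have hpolarb : ∀ i j, QuadraticMap.polar (QuadraticForm.baseChange L q) (b i) (b j)
      = algebraMap k L (QuadraticMap.polar q (e i) (e j)) := by
    intro i j
    simp only [QuadraticMap.polar,
      show b i = (1 : L) ⊗ₜ[k] (bk i) from Module.Basis.baseChange_apply L bk i,
      show b j = (1 : L) ⊗ₜ[k] (bk j) from Module.Basis.baseChange_apply L bk j,
      ← TensorProduct.tmul_add, QuadraticForm.baseChange_tmul, map_sub,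
      Algebra.smul_def, mul_one, map_add]
    rfl
  have hval : QuadraticForm.baseChange L q v = Ev (⇑(algebraMap k L) ∘ c) l := by
    conv_lhs => rw [hv]
    rw [expand3]
    simp only [Ev, Function.comp_apply, hc0, hc1, hc2, hc3, hc4, hc5, hQb, hpolarb]
    ring
  have hl0 : l ≠ 0 := by
    intro h0
    apply hv0
    rw [hv]
    have h1 : ∀ i, l i = 0 := fun i => congrFun h0 i
    rw [h1 0, h1 1, h1 2]
    simp only [zero_smul, add_zero, zero_add]
  have hEvL : Ev (⇑(algebraMap k L) ∘ c) l = 0 := by rw [← hval]; exact hvQ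
  -- descent
  by_cases hall : ∀ i, l i ∈ Set.range (algebraMap k L)
  · choose w hw using hall
    refine ⟨w, ?_, ?_⟩
    · intro h0
      apply hl0
      funext i
      rw [← hw i, congrFun h0 i]; simp
    · rw [hqEv]
      apply (algebraMap k L).injective
      rw [map_Ev, map_zero]
      have h2 : ⇑(algebraMap k L) ∘ w = l := funext hw
      rw [h2]
      exact hEvL
  · push_neg at hall
    obtain ⟨j, hj⟩ := hall
    set a : L := l j with ha
    set K : IntermediateField k L := IntermediateField.adjoin k {a} with hK
    have haK : a ∈ K := IntermediateField.mem_adjoin_simple_self k a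
    have hKne : K ≠ ⊥ := by
      intro h0
      rw [h0, IntermediateField.mem_bot] at haK
      exact hj haK
    have hfin : Module.finrank k K * Module.finrank K L = Module.finrank k L :=
      Module.finrank_mul_finrank k K L
    have hK2 : 2 ≤ Module.finrank k K := by
      have h1 : Module.finrank k K ≠ 1 := fun h1 =>
        hKne (IntermediateField.finrank_eq_one_iff.mp h1)
      have h2 : 0 < Module.finrank k K := Module.finrank_pos
      omega
    have hoddK : Odd (Module.finrank k K) ∧ Odd (Module.finrank K L) :=
      Nat.odd_mul.mp (hfin ▸ hodd)
    haveI : FiniteDimensional K L := FiniteDimensional.right k (↥K) L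
    have hKiso : ∃ w : Fin 3 → K, w ≠ 0 ∧ Ev (⇑(algebraMap k K) ∘ c) w = 0 := by
      refine tower (Module.finrank K L) K L inferInstance inferInstance inferInstance
        inferInstance hoddK.2 rfl (⇑(algebraMap k K) ∘ c) ⟨l, hl0, ?_⟩
      have h2 : ⇑(algebraMap K L) ∘ ⇑(algebraMap k K) ∘ c = ⇑(algebraMap k L) ∘ c := by
        funext i
        simp only [Function.comp_apply]
        exact (IsScalarTower.algebraMap_apply k K L (c i)).symm
      rw [h2]
      exact hEvL
    obtain ⟨w, hw0, hwE⟩ := step c a hKiso hoddK.1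
    exact ⟨w, hw0, by rw [hqEv]; exact hwE⟩
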